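/- Under a 'do no harm' constraint requiring d(x, b) ≥ d_uncon(x, b) for all x in the disadvantaged group b (equivalently requiring q_b ≥ q_b^uncon), the utility-optimal rule satisfying a CV constraint is still a per-group-threshold rule, with the constraint only imposing the upper bound t_b ≤ 1/2 on the group-b threshold. -/

import Mathlib

open MeasureTheory

/-- group-wise positive rate of a rule `d : 𝒳 → Bool → ℝ` within group `z` -/
noncomputable def qrate {Ω 𝒳 : Type*} [MeasurableSpace Ω] (μ : Measure Ω)
    (X : Ω → 𝒳) (Z : Ω → Bool) (d : 𝒳 → Bool → ℝ) (z : Bool) : ℝ :=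
  (μ ({ω | d (X ω) (Z ω) = 1} ∩ {ω | Z ω = z})).toReal / (μ {ω | Z ω = z}).toReal

/-- conditional "survival function" of `p` within group `z` -/
noncomputable def Fcdf {Ω 𝒳 : Type*} [MeasurableSpace Ω] (μ : Measure Ω)
    (X : Ω → 𝒳) (Z : Ω → Bool) (p : 𝒳 → Bool → ℝ) (z : Bool) (t : ℝ) : ℝ :=
  (μ ({ω | t ≤ p (X ω) (Z ω)} ∩ {ω | Z ω = z})).toReal / (μ {ω | Z ω = z}).toReal

/-- Under the "do no harm" constraint
`q_b(d) ≥ q_b(d_uncon)` (no member of group `b` positively classified by the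
unconstrained rule loses their positive decision), the utility-optimal rule
subject to the CV constraint `q_a − q_b ≤ γ` is still a per-group-threshold
rule, the do-no-harm constraint only imposing the upper bound `t_b ≤ 1/2` on
the group-`b` threshold. (Groups: `true = a`, `false = b`.) -/
theorem do_no_harm_optimum_is_threshold_rule
    {Ω 𝒳 : Type*} [MeasurableSpace Ω] [MeasurableSpace 𝒳]
    (μ : Measure Ω) [IsProbabilityMeasure μ]
    (X : Ω → 𝒳) (Z : Ω → Bool)
    (hX : Measurable X) (hZ : Measurable Z)
    (p : 𝒳 → Bool → ℝ) (hp : ∀ z, Measurable fun x => p x z)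
    (hp01 : ∀ x z, p x z ∈ Set.Icc (0 : ℝ) 1)
    (hZpos : ∀ z, 0 < (μ {ω | Z ω = z}).toReal)
    (hatomless : ∀ z r, μ ({ω | p (X ω) (Z ω) = r} ∩ {ω | Z ω = z}) = 0)
    -- continuous positive-density conditional distributions:
    (hFcont : ∀ z, Continuous fun t =>
      (μ ({ω | t ≤ p (X ω) (Z ω)} ∩ {ω | Z ω = z})).toReal / (μ {ω | Z ω = z}).toReal)
    (hFanti : ∀ z, StrictAntiOn (fun t =>
      (μ ({ω | t ≤ p (X ω) (Z ω)} ∩ {ω | Z ω = z})).toReal / (μ {ω | Z ω = z}).toReal)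
      (Set.Icc 0 1))
    (duncon : 𝒳 → Bool → ℝ)
    (hduncon : ∀ x z, duncon x z = if (1 / 2 : ℝ) ≤ p x z then 1 else 0)
    (γ : ℝ) (hγ : 0 ≤ γ) :
    ∃ (ta tb : ℝ) (dstar : 𝒳 → Bool → ℝ),
      tb ≤ 1 / 2 ∧
      (∀ x z, dstar x z = if (if z then ta else tb) ≤ p x z then 1 else 0) ∧
      -- d* satisfies the CV and do-no-harm constraints
      qrate μ X Z dstar true - qrate μ X Z dstar false ≤ γ ∧
      qrate μ X Z duncon false ≤ qrate μ X Z dstar false ∧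
      -- d* maximizes utility among rules satisfying both constraints
      (∀ d : 𝒳 → Bool → ℝ,
        (∀ x z, d x z = 0 ∨ d x z = 1) →
        (∀ z, Measurable fun x => d x z) →
        qrate μ X Z d true - qrate μ X Z d false ≤ γ →
        qrate μ X Z duncon false ≤ qrate μ X Z d false →
        ∫ ω, d (X ω) (Z ω) * (p (X ω) (Z ω) - 1 / 2) ∂μ
          ≤ ∫ ω, dstar (X ω) (Z ω) * (p (X ω) (Z ω) - 1 / 2) ∂μ) := by
  classical
  have hAm : MeasurableSet {ω | Z ω = true} := hZ (measurableSet_singleton true)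
  have hBm : MeasurableSet {ω | Z ω = false} := hZ (measurableSet_singleton false)
  set Pa := (μ {ω | Z ω = true}).toReal with hPadef
  set Pb := (μ {ω | Z ω = false}).toReal with hPbdef
  have hPa0 : 0 < Pa := hZpos true
  have hPb0 : 0 < Pb := hZpos false
  -- measurability of composed functions
  have hpm : Measurable fun ω => p (X ω) (Z ω) := by
    have h1 : (fun ω => p (X ω) (Z ω))
        = fun ω => if Z ω = true then p (X ω) true else p (X ω) false := by
      funext ω; cases h : Z ω <;> simp [h]
    rw [h1]
    exact Measurable.ite hAm ((hp true).comp hX) ((hp false).comp hX)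
  have hdm : ∀ d : 𝒳 → Bool → ℝ, (∀ z, Measurable fun x => d x z) →
      Measurable fun ω => d (X ω) (Z ω) := by
    intro d hd
    have h1 : (fun ω => d (X ω) (Z ω))
        = fun ω => if Z ω = true then d (X ω) true else d (X ω) false := by
      funext ω; cases h : Z ω <;> simp [h]
    rw [h1]
    exact Measurable.ite hAm ((hd true).comp hX) ((hd false).comp hX)
  -- F is antitone
  have hFle : ∀ (z : Bool) (s t : ℝ), s ≤ t →
      Fcdf μ X Z p z t ≤ Fcdf μ X Z p z s := by
    intro z s t hst
    unfold Fcdf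
    apply (div_le_div_iff_of_pos_right (hZpos z)).mpr
    apply ENNReal.toReal_mono (measure_ne_top μ _)
    apply measure_mono
    exact Set.inter_subset_inter_left _ (fun ω hw => le_trans hst hw)
  -- qrate of a threshold rule
  have hqthr : ∀ (ta tb : ℝ) (z : Bool),
      qrate μ X Z (fun x z' => if (if z' then ta else tb) ≤ p x z' then 1 else 0) z
        = Fcdf μ X Z p z (if z then ta else tb) := by
    intro ta tb z
    have hset : {ω | (fun x z' => if (if z' then ta else tb) ≤ p x z' then (1:ℝ) else 0) (X ω) (Z ω) = 1}
          ∩ {ω | Z ω = z}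
        = {ω | (if z then ta else tb) ≤ p (X ω) (Z ω)} ∩ {ω | Z ω = z} := by
      ext ω
      simp only [Set.mem_inter_iff, Set.mem_setOf_eq]
      constructor
      · rintro ⟨h1, h2⟩
        rw [h2] at h1
        refine ⟨?_, h2⟩
        rw [h2]
        by_contra hc
        rw [if_neg hc] at h1
        norm_num at h1
      · rintro ⟨h1, h2⟩
        rw [h2] at h1 ⊢
        exact ⟨if_pos h1, rfl⟩
    unfold qrate Fcdf
    rw [hset]
  -- qrate of the unconstrained rule in group b
  have hqun : qrate μ X Z duncon false = Fcdf μ X Z p false (1/2) := by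
    have hset : {ω | duncon (X ω) (Z ω) = 1} = {ω | (1:ℝ)/2 ≤ p (X ω) (Z ω)} := by
      ext ω
      simp only [Set.mem_setOf_eq, hduncon]
      constructor
      · intro h1
        by_contra hc
        rw [if_neg hc] at h1
        norm_num at h1
      · intro h1
        exact if_pos h1
    unfold qrate Fcdf
    rw [hset]
  -- integrability from boundedness
  have hint : ∀ (f : Ω → ℝ) (C : ℝ), Measurable f → (∀ ω, |f ω| ≤ C) → Integrable f μ := by
    intro f C hf hC
    exact (integrable_const C).mono' hf.aestronglyMeasurable
      (Filter.Eventually.of_forall fun ω => by simpa [Real.norm_eq_abs] using hC ω)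
  -- key lemma: for any multiplier lam ≥ 0 with appropriate complementary slackness,
  -- the threshold rule (1/2 + lam/Pa, 1/2 - lam/Pb) works
  have key : ∀ lam : ℝ, 0 ≤ lam →
      Fcdf μ X Z p true (1/2 + lam/Pa) - Fcdf μ X Z p false (1/2 - lam/Pb) ≤ γ →
      lam * (γ - (Fcdf μ X Z p true (1/2 + lam/Pa) - Fcdf μ X Z p false (1/2 - lam/Pb))) = 0 →
      ∃ (ta tb : ℝ) (dstar : 𝒳 → Bool → ℝ),
      tb ≤ 1 / 2 ∧
      (∀ x z, dstar x z = if (if z then ta else tb) ≤ p x z then 1 else 0) ∧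
      qrate μ X Z dstar true - qrate μ X Z dstar false ≤ γ ∧
      qrate μ X Z duncon false ≤ qrate μ X Z dstar false ∧
      (∀ d : 𝒳 → Bool → ℝ,
        (∀ x z, d x z = 0 ∨ d x z = 1) →
        (∀ z, Measurable fun x => d x z) →
        qrate μ X Z d true - qrate μ X Z d false ≤ γ →
        qrate μ X Z duncon false ≤ qrate μ X Z d false →
        ∫ ω, d (X ω) (Z ω) * (p (X ω) (Z ω) - 1 / 2) ∂μ
          ≤ ∫ ω, dstar (X ω) (Z ω) * (p (X ω) (Z ω) - 1 / 2) ∂μ) := by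
    intro lam hlam hCV hslack
    have hla : 0 ≤ lam / Pa := div_nonneg hlam hPa0.le
    have hlb : 0 ≤ lam / Pb := div_nonneg hlam hPb0.le
    set ta : ℝ := 1/2 + lam/Pa with htadef
    set tb : ℝ := 1/2 - lam/Pb with htbdef
    set dstar : 𝒳 → Bool → ℝ := fun x z => if (if z then ta else tb) ≤ p x z then 1 else 0
      with hdstardef
    have hds01 : ∀ x z, dstar x z = 0 ∨ dstar x z = 1 := by
      intro x z
      by_cases h : (if z then ta else tb) ≤ p x z
      · right; simp [hdstardef, h]
      · left; simp [hdstardef, h]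
    have hdsm : ∀ z, Measurable fun x => dstar x z := by
      intro z
      apply Measurable.ite _ measurable_const measurable_const
      exact (hp z) measurableSet_Ici
    -- the "tilted" pointwise threshold
    set c : Ω → ℝ := fun ω => if Z ω then ta else tb with hcdef
    have hcm : Measurable c := Measurable.ite hAm measurable_const measurable_const
    have hcb : ∀ ω, |c ω| ≤ 1/2 + lam/Pa + lam/Pb := by
      intro ω
      rcases Bool.eq_false_or_eq_true (Z ω) with h | h <;>
        simp only [hcdef, h, if_true, if_false, htadef, htbdef] <;>
        rw [abs_le] <;> constructor <;> simp <;> linarith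
    -- utility decomposition for a {0,1}-valued rule
    have hU : ∀ d : 𝒳 → Bool → ℝ, (∀ x z, d x z = 0 ∨ d x z = 1) →
        (∀ z, Measurable fun x => d x z) →
        ∫ ω, d (X ω) (Z ω) * (p (X ω) (Z ω) - 1 / 2) ∂μ
          = (∫ ω, d (X ω) (Z ω) * (p (X ω) (Z ω) - c ω) ∂μ)
            + lam * (qrate μ X Z d true - qrate μ X Z d false) := by
      intro d hd01 hdmz
      have hdmc := hdm d hdmz
      have hdb : ∀ ω, |d (X ω) (Z ω)| ≤ 1 := by
        intro ω; rcases hd01 (X ω) (Z ω) with h | h <;> rw [h] <;> norm_num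
      have hpb : ∀ ω, |p (X ω) (Z ω)| ≤ 1 := by
        intro ω
        rcases hp01 (X ω) (Z ω) with ⟨h0, h1⟩
        rw [abs_le]; constructor <;> linarith
      have hint1 : Integrable (fun ω => d (X ω) (Z ω) * (p (X ω) (Z ω) - c ω)) μ := by
        apply hint _ (1 + (1/2 + lam/Pa + lam/Pb)) (hdmc.mul (hpm.sub hcm))
        intro ω
        show |d (X ω) (Z ω) * (p (X ω) (Z ω) - c ω)| ≤ _
        rw [abs_mul]
        have h1 : |p (X ω) (Z ω) - c ω| ≤ 1 + (1/2 + lam/Pa + lam/Pb) := by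
          have := abs_sub (p (X ω) (Z ω)) (c ω)
          have := hcb ω; have := hpb ω
          calc |p (X ω) (Z ω) - c ω| ≤ |p (X ω) (Z ω)| + |c ω| := abs_sub _ _
            _ ≤ 1 + (1/2 + lam/Pa + lam/Pb) := by linarith
        calc |d (X ω) (Z ω)| * |p (X ω) (Z ω) - c ω|
            ≤ 1 * (1 + (1/2 + lam/Pa + lam/Pb)) := by
              apply mul_le_mul (hdb ω) h1 (abs_nonneg _) zero_le_one
          _ = 1 + (1/2 + lam/Pa + lam/Pb) := one_mul _
      -- the set where d decides 1
      set S : Set Ω := {ω | d (X ω) (Z ω) = 1} with hSdef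
      have hSm : MeasurableSet S := hdmc (measurableSet_singleton 1)
      have hSAm : MeasurableSet (S ∩ {ω | Z ω = true}) := hSm.inter hAm
      have hSBm : MeasurableSet (S ∩ {ω | Z ω = false}) := hSm.inter hBm
      -- pointwise identity for the constraint part
      have hpt : ∀ ω, d (X ω) (Z ω) * (c ω - 1/2)
          = (S ∩ {ω | Z ω = true}).indicator (fun _ => lam/Pa) ω
            + (S ∩ {ω | Z ω = false}).indicator (fun _ => -(lam/Pb)) ω := by
        intro ω
        have h2 := hd01 (X ω) (Z ω)
        rcases Bool.eq_false_or_eq_true (Z ω) with h | h <;> rw [h] at h2 <;>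
          rcases h2 with hd | hd <;>
          simp only [Set.indicator_apply, Set.mem_inter_iff, Set.mem_setOf_eq, hSdef,
            hcdef, h, hd, if_true, if_false, htadef, htbdef] <;>
          ring_nf <;>
          norm_num <;>
          ring
      have hint2 : Integrable (fun ω => d (X ω) (Z ω) * (c ω - 1/2)) μ := by
        rw [show (fun ω => d (X ω) (Z ω) * (c ω - 1/2))
            = fun ω => (S ∩ {ω | Z ω = true}).indicator (fun _ => lam/Pa) ω
              + (S ∩ {ω | Z ω = false}).indicator (fun _ => -(lam/Pb)) ω from funext hpt]
        exact ((integrable_const _).indicator hSAm).add ((integrable_const _).indicator hSBm)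
      have hsplit : (fun ω => d (X ω) (Z ω) * (p (X ω) (Z ω) - 1/2))
          = fun ω => d (X ω) (Z ω) * (p (X ω) (Z ω) - c ω)
            + d (X ω) (Z ω) * (c ω - 1/2) := by
        funext ω; ring
      rw [show (1:ℝ)/2 = 1/2 from rfl]
      rw [hsplit, integral_add hint1 hint2]
      congr 1
      -- compute the constraint part
      rw [show (fun ω => d (X ω) (Z ω) * (c ω - 1/2))
          = fun ω => (S ∩ {ω | Z ω = true}).indicator (fun _ => lam/Pa) ω
            + (S ∩ {ω | Z ω = false}).indicator (fun _ => -(lam/Pb)) ω from funext hpt]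
      rw [integral_add ((integrable_const _).indicator hSAm) ((integrable_const _).indicator hSBm)]
      rw [integral_indicator_const _ hSAm, integral_indicator_const _ hSBm]
      unfold qrate
      rw [smul_eq_mul, smul_eq_mul, ← hPadef, ← hPbdef]
      simp only [Measure.real, hSdef]
      ring
    -- pointwise optimality of dstar for the tilted utility
    have hpw : ∀ d : 𝒳 → Bool → ℝ, (∀ x z, d x z = 0 ∨ d x z = 1) →
        ∀ ω, d (X ω) (Z ω) * (p (X ω) (Z ω) - c ω)
          ≤ dstar (X ω) (Z ω) * (p (X ω) (Z ω) - c ω) := by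
      intro d hd01 ω
      have hds : dstar (X ω) (Z ω) = if c ω ≤ p (X ω) (Z ω) then 1 else 0 := by
        simp only [hdstardef, hcdef]
      by_cases hcle : c ω ≤ p (X ω) (Z ω)
      · rw [hds, if_pos hcle]
        rcases hd01 (X ω) (Z ω) with h | h <;> rw [h] <;> nlinarith
      · rw [hds, if_neg hcle]
        push_neg at hcle
        rcases hd01 (X ω) (Z ω) with h | h <;> rw [h] <;> nlinarith
    -- the qrates of dstar
    have hqa : qrate μ X Z dstar true = Fcdf μ X Z p true ta := by
      rw [hdstardef]; simpa using hqthr ta tb true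
    have hqb : qrate μ X Z dstar false = Fcdf μ X Z p false tb := by
      rw [hdstardef]; simpa using hqthr ta tb false
    refine ⟨ta, tb, dstar, by rw [htbdef]; linarith, fun x z => rfl, ?_, ?_, ?_⟩
    · rw [hqa, hqb]; exact hCV
    · rw [hqun, hqb]
      exact hFle false tb (1/2) (by rw [htbdef]; linarith)
    · intro d hd01 hdmz hdCV hdnh
      have hUd := hU d hd01 hdmz
      have hUs := hU dstar hds01 hdsm
      have hdmc := hdm d hdmz
      have hIle : ∫ ω, d (X ω) (Z ω) * (p (X ω) (Z ω) - c ω) ∂μ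
          ≤ ∫ ω, dstar (X ω) (Z ω) * (p (X ω) (Z ω) - c ω) ∂μ := by
        apply integral_mono _ _ (fun ω => hpw d hd01 ω)
        · apply hint _ (1 + (1/2 + lam/Pa + lam/Pb)) (hdmc.mul (hpm.sub hcm))
          intro ω
          show |d (X ω) (Z ω) * (p (X ω) (Z ω) - c ω)| ≤ _
          rw [abs_mul]
          have hdb : |d (X ω) (Z ω)| ≤ 1 := by
            rcases hd01 (X ω) (Z ω) with h | h <;> rw [h] <;> norm_num
          have hpb : |p (X ω) (Z ω)| ≤ 1 := by
            rcases hp01 (X ω) (Z ω) with ⟨h0, h1⟩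
            rw [abs_le]; constructor <;> linarith
          have h1 : |p (X ω) (Z ω) - c ω| ≤ 1 + (1/2 + lam/Pa + lam/Pb) := by
            have := hcb ω
            calc |p (X ω) (Z ω) - c ω| ≤ |p (X ω) (Z ω)| + |c ω| := abs_sub _ _
              _ ≤ 1 + (1/2 + lam/Pa + lam/Pb) := by linarith
          calc |d (X ω) (Z ω)| * |p (X ω) (Z ω) - c ω|
              ≤ 1 * (1 + (1/2 + lam/Pa + lam/Pb)) :=
                mul_le_mul hdb h1 (abs_nonneg _) zero_le_one
            _ = _ := one_mul _
        · apply hint _ (1 + (1/2 + lam/Pa + lam/Pb)) ((hdm dstar hdsm).mul (hpm.sub hcm))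
          intro ω
          show |dstar (X ω) (Z ω) * (p (X ω) (Z ω) - c ω)| ≤ _
          rw [abs_mul]
          have hdb : |dstar (X ω) (Z ω)| ≤ 1 := by
            rcases hds01 (X ω) (Z ω) with h | h <;> rw [h] <;> norm_num
          have hpb : |p (X ω) (Z ω)| ≤ 1 := by
            rcases hp01 (X ω) (Z ω) with ⟨h0, h1⟩
            rw [abs_le]; constructor <;> linarith
          have h1 : |p (X ω) (Z ω) - c ω| ≤ 1 + (1/2 + lam/Pa + lam/Pb) := by
            have := hcb ω
            calc |p (X ω) (Z ω) - c ω| ≤ |p (X ω) (Z ω)| + |c ω| := abs_sub _ _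
              _ ≤ 1 + (1/2 + lam/Pa + lam/Pb) := by linarith
          calc |dstar (X ω) (Z ω)| * |p (X ω) (Z ω) - c ω|
              ≤ 1 * (1 + (1/2 + lam/Pa + lam/Pb)) :=
                mul_le_mul hdb h1 (abs_nonneg _) zero_le_one
            _ = _ := one_mul _
      have hcvmul : lam * (qrate μ X Z d true - qrate μ X Z d false) ≤ lam * γ :=
        mul_le_mul_of_nonneg_left hdCV hlam
      have hslack' : lam * γ
          = lam * (qrate μ X Z dstar true - qrate μ X Z dstar false) := by
        rw [hqa, hqb]
        rw [mul_sub] at hslack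
        rw [htadef, htbdef] at *
        linarith [hslack]
      rw [hUd, hUs]
      calc (∫ ω, d (X ω) (Z ω) * (p (X ω) (Z ω) - c ω) ∂μ)
            + lam * (qrate μ X Z d true - qrate μ X Z d false)
          ≤ (∫ ω, dstar (X ω) (Z ω) * (p (X ω) (Z ω) - c ω) ∂μ) + lam * γ := by
            linarith
        _ = _ := by rw [hslack']
  -- case analysis: is the CV constraint slack at the unconstrained optimum?
  by_cases hcase : Fcdf μ X Z p true (1/2) - Fcdf μ X Z p false (1/2) ≤ γ
  · apply key 0 le_rfl
    · simpa using hcase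
    · simp
  · push_neg at hcase
    -- IVT to find the binding multiplier
    set h : ℝ → ℝ := fun lam =>
      Fcdf μ X Z p true (1/2 + lam/Pa) - Fcdf μ X Z p false (1/2 - lam/Pb) with hhdef
    have hhc : Continuous h := by
      have h1 : Continuous (Fcdf μ X Z p true) := hFcont true
      have h2 : Continuous (Fcdf μ X Z p false) := hFcont false
      exact (h1.comp (continuous_const.add (continuous_id.div_const Pa))).sub
        (h2.comp (continuous_const.sub (continuous_id.div_const Pb)))
    have hL : (0:ℝ) ≤ Pa + Pb := by linarith
    have hFa0 : Fcdf μ X Z p true (1/2 + (Pa + Pb)/Pa) = 0 := by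
      unfold Fcdf
      have hset : {ω | 1/2 + (Pa + Pb)/Pa ≤ p (X ω) (Z ω)} ∩ {ω | Z ω = true} = ∅ := by
        ext ω
        simp only [Set.mem_inter_iff, Set.mem_setOf_eq, Set.mem_empty_iff_false, iff_false,
          not_and]
        intro h1 _
        have hge : (1:ℝ) ≤ (Pa + Pb)/Pa := by
          rw [le_div_iff₀ hPa0]; linarith
        have := (hp01 (X ω) (Z ω)).2
        linarith
      rw [hset]
      simp
    have hFb1 : Fcdf μ X Z p false (1/2 - (Pa + Pb)/Pb) = 1 := by
      unfold Fcdf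
      have hset : {ω | 1/2 - (Pa + Pb)/Pb ≤ p (X ω) (Z ω)} ∩ {ω | Z ω = false}
          = {ω | Z ω = false} := by
        ext ω
        simp only [Set.mem_inter_iff, Set.mem_setOf_eq, and_iff_right_iff_imp]
        intro _
        have hge : (1:ℝ) ≤ (Pa + Pb)/Pb := by
          rw [le_div_iff₀ hPb0]; linarith
        have := (hp01 (X ω) (Z ω)).1
        linarith
      rw [hset, ← hPbdef]
      exact div_self (ne_of_gt hPb0)
    have hhL : h (Pa + Pb) ≤ γ := by
      rw [hhdef]
      simp only
      rw [hFa0, hFb1]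
      linarith
    have hh0 : γ ≤ h 0 := by
      rw [hhdef]
      simp only
      norm_num
      exact hcase.le
    have hmem : γ ∈ Set.Icc (h (Pa + Pb)) (h 0) := ⟨hhL, hh0⟩
    have := intermediate_value_Icc' hL hhc.continuousOn hmem
    obtain ⟨lam, hlamIcc, hlameq⟩ := this
    apply key lam hlamIcc.1
    · rw [show Fcdf μ X Z p true (1/2 + lam/Pa) - Fcdf μ X Z p false (1/2 - lam/Pb)
          = h lam from rfl, hlameq]
    · rw [show Fcdf μ X Z p true (1/2 + lam/Pa) - Fcdf μ X Z p false (1/2 - lam/Pb)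
          = h lam from rfl, hlameq]
      simp
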